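/- The category of associative n-algebras over a field k of characteristic zero has an initial object (A_n, λ_n), and A_n can be described as the free associative (tensor) algebra on planar n-trees, i.e. rooted trees with edges coloured by {1,…,n} and, at each vertex, a separate linear ordering of the incoming edges of each colour, with λ_n the grafting operation on n-tuples of ordered forests. -/

import Mathlib

namespace CTrees

inductive PTree (n : ℕ) : Type where
  | node : List (Fin n × PTree n) → PTree n

/-- Two representatives define the same planar `n`-tree: at each vertex, the
incoming edges of each colour are linearly ordered, but the interleaving of
the different colours is immaterial. -/
inductive PlEquiv {n : ℕ} : PTree n → PTree n → Prop where
  | node {l₁ l₂ : List (Fin n × PTree n)}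
      (h : ∀ i : Fin n, List.Forall₂ PlEquiv
        ((l₁.filter fun p => p.1 = i).map Prod.snd)
        ((l₂.filter fun p => p.1 = i).map Prod.snd)) :
      PlEquiv (.node l₁) (.node l₂)

/-- Planar `n`-trees: rooted trees with edges coloured by `{1,…,n}` and, at
each vertex, a linear ordering of the incoming edges of each colour. -/
def PlTree (n : ℕ) : Type := Quot (@PlEquiv n)

variable {n : ℕ} (k : Type) [CommRing k]

/-- The element of the free associative algebra `A_n` given by a word of
planar `n`-trees. -/
noncomputable def wmon (w : List (PlTree n)) : FreeAlgebra k (PlTree n) :=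
  (w.map (FreeAlgebra.ι k)).prod

/-- Grafting of an `n`-tuple of ordered forests (words of planar trees). -/
noncomputable def pgraftW (g : Fin n → List (PlTree n)) : PlTree n :=
  Quot.mk _ (PTree.node
    ((List.finRange n).flatMap fun i => (g i).map fun t => (i, Quot.out t)))

mutual
/-- Number of vertices of a planar representative. -/
def psize : PTree n → ℕ
  | .node l => 1 + psizeL l
def psizeL : List (Fin n × PTree n) → ℕ
  | [] => 0
  | a :: l => psize a.2 + psizeL l
end

noncomputable def wsize (w : List (PlTree n)) : ℕ :=
  (w.map fun t => psize (Quot.out t)).sum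



open scoped TensorProduct
open PiTensorProduct

/-- An associative `n`-algebra over `k`: a unital associative `k`-algebra `A`
together with a linear map `α : A^{⊗n} → A`. -/
structure AssocNAlgebra (k : Type) [CommRing k] (n : ℕ) : Type 1 where
  carrier : Type
  [isRing : Ring carrier]
  [isAlgebra : Algebra k carrier]
  op : (⨂[k]^n carrier) →ₗ[k] carrier

attribute [instance] AssocNAlgebra.isRing AssocNAlgebra.isAlgebra

/-! ### Auxiliary combinatorial lemmas -/

theorem one_le_psize (t : PTree n) : 1 ≤ psize t := by
  cases t; simp [psize]

theorem psizeL_eq (l : List (Fin n × PTree n)) :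
    psizeL l = (l.map fun p => psize p.2).sum := by
  induction l with
  | nil => rfl
  | cons a l ih => simp [psizeL, ih]

theorem psize_le_of_mem {l : List (Fin n × PTree n)} {p : Fin n × PTree n} (h : p ∈ l) :
    psize p.2 ≤ psizeL l := by
  induction l with
  | nil => cases h
  | cons a l ih =>
    rcases List.mem_cons.1 h with rfl | h
    · simp [psizeL]
    · have := ih h; simp [psizeL]; omega

theorem forall₂_sum_map {α : Type*} {R : α → α → Prop} {f : α → ℕ} :
    ∀ {l₁ l₂ : List α}, List.Forall₂ R l₁ l₂ →
      (∀ a ∈ l₁, ∀ b, R a b → f a = f b) → (l₁.map f).sum = (l₂.map f).sum := by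
  intro l₁ l₂ h
  induction h with
  | nil => simp
  | @cons a b l₁ l₂ hab h ih =>
    intro hf
    simp only [List.map_cons, List.sum_cons]
    rw [hf a (List.mem_cons_self) b hab, ih fun x hx => hf x (List.mem_cons_of_mem _ hx)]

theorem forall₂_symm_mem {α : Type*} {R S : α → α → Prop} :
    ∀ {l₁ l₂ : List α}, List.Forall₂ R l₁ l₂ →
      (∀ a ∈ l₁, ∀ b, R a b → S b a) → List.Forall₂ S l₂ l₁ := by
  intro l₁ l₂ h
  induction h with
  | nil => exact fun _ => List.Forall₂.nil
  | @cons a b l₁ l₂ hab h ih =>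
    intro hf
    exact List.Forall₂.cons (hf a (List.mem_cons_self) b hab)
      (ih fun x hx => hf x (List.mem_cons_of_mem _ hx))

theorem forall₂_trans_mem {α : Type*} {R : α → α → Prop} :
    ∀ {l₁ l₂ l₃ : List α}, List.Forall₂ R l₁ l₂ → List.Forall₂ R l₂ l₃ →
      (∀ a ∈ l₁, ∀ b c, R a b → R b c → R a c) → List.Forall₂ R l₁ l₃ := by
  intro l₁ l₂ l₃ h
  induction h generalizing l₃ with
  | nil => intro h₂ _; cases h₂; exact List.Forall₂.nil
  | @cons a b l₁ l₂ hab h ih =>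
    intro h₂ hf
    cases h₂ with
    | cons hbc h₂ =>
      exact List.Forall₂.cons (hf a (List.mem_cons_self) b _ hab hbc)
        (ih h₂ fun x hx => hf x (List.mem_cons_of_mem _ hx))

theorem forall₂_map_same {α β : Type*} {R : β → β → Prop} {f g : α → β} :
    ∀ {l : List α}, (∀ a ∈ l, R (f a) (g a)) → List.Forall₂ R (l.map f) (l.map g) := by
  intro l
  induction l with
  | nil => intro _; simp
  | cons a l ih =>
    intro h
    exact List.Forall₂.cons (h a (List.mem_cons_self))
      (ih fun x hx => h x (List.mem_cons_of_mem _ hx))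

theorem eq_of_forall₂_map {α β : Type*} {R : β → β → Prop} {f : α → β}
    (inj : ∀ a b, R (f a) (f b) → a = b) :
    ∀ {l₁ l₂ : List α}, List.Forall₂ R (l₁.map f) (l₂.map f) → l₁ = l₂ := by
  intro l₁
  induction l₁ with
  | nil => intro l₂ h; cases l₂ with
    | nil => rfl
    | cons b l₂ => simp at h
  | cons a l₁ ih =>
    intro l₂ h
    cases l₂ with
    | nil => simp at h
    | cons b l₂ =>
      simp only [List.map_cons] at h
      cases h with
      | cons hab h => rw [inj a b hab, ih h]

theorem psize_filter_sum (l : List (Fin n × PTree n)) :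
    psizeL l = ∑ i : Fin n, psizeL (l.filter fun p => p.1 = i) := by
  induction l with
  | nil => simp [psizeL]
  | cons a l ih =>
    have h : ∀ i : Fin n, psizeL ((a :: l).filter fun p => p.1 = i)
        = (if a.1 = i then psize a.2 else 0) + psizeL (l.filter fun p => p.1 = i) := by
      intro i
      by_cases h : a.1 = i <;> simp [List.filter_cons, h, psizeL]
    simp only [h, Finset.sum_add_distrib, ← ih]
    have : (∑ i : Fin n, if a.1 = i then psize a.2 else 0) = psize a.2 := by
      simp [Finset.sum_ite_eq]
    rw [this]; rfl

theorem psize_congr : ∀ (m : ℕ) {t₁ t₂ : PTree n}, psize t₁ ≤ m →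
    PlEquiv t₁ t₂ → psize t₁ = psize t₂ := by
  intro m
  induction m with
  | zero => intro t₁ t₂ h _; have := one_le_psize t₁; omega
  | succ m ih =>
    intro t₁ t₂ h he
    cases he with
    | @node l₁ l₂ hf =>
      have hb : psizeL l₁ ≤ m := by simp [psize] at h; omega
      simp only [psize]
      rw [psize_filter_sum l₁, psize_filter_sum l₂]
      congr 1
      apply Finset.sum_congr rfl
      intro i _
      have h₁ : psizeL (l₁.filter fun p => p.1 = i)
          = (((l₁.filter fun p => p.1 = i).map Prod.snd).map psize).sum := by
        rw [psizeL_eq, List.map_map]; rfl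
      have h₂ : psizeL (l₂.filter fun p => p.1 = i)
          = (((l₂.filter fun p => p.1 = i).map Prod.snd).map psize).sum := by
        rw [psizeL_eq, List.map_map]; rfl
      rw [h₁, h₂]
      apply forall₂_sum_map (hf i)
      intro a ha b hab
      apply ih _ hab
      obtain ⟨p, hp, rfl⟩ := List.mem_map.1 ha
      exact le_trans (psize_le_of_mem (List.mem_of_mem_filter hp)) hb

theorem plEquiv_refl : ∀ (m : ℕ) (t : PTree n), psize t ≤ m → PlEquiv t t := by
  intro m
  induction m with
  | zero => intro t h; have := one_le_psize t; omega
  | succ m ih =>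
    intro t h
    cases t with
    | node l =>
      have hb : psizeL l ≤ m := by simp [psize] at h; omega
      constructor
      intro i
      rw [List.forall₂_same]
      intro x hx
      obtain ⟨p, hp, rfl⟩ := List.mem_map.1 hx
      exact ih _ (le_trans (psize_le_of_mem (List.mem_of_mem_filter hp)) hb)

theorem plEquiv_symm : ∀ (m : ℕ) {t₁ t₂ : PTree n}, psize t₁ ≤ m →
    PlEquiv t₁ t₂ → PlEquiv t₂ t₁ := by
  intro m
  induction m with
  | zero => intro t₁ t₂ h _; have := one_le_psize t₁; omega
  | succ m ih =>
    intro t₁ t₂ h he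
    cases he with
    | @node l₁ l₂ hf =>
      have hb : psizeL l₁ ≤ m := by simp [psize] at h; omega
      constructor
      intro i
      apply forall₂_symm_mem (hf i)
      intro a ha b hab
      obtain ⟨p, hp, rfl⟩ := List.mem_map.1 ha
      exact ih (le_trans (psize_le_of_mem (List.mem_of_mem_filter hp)) hb) hab

theorem plEquiv_trans : ∀ (m : ℕ) {t₁ t₂ t₃ : PTree n}, psize t₁ ≤ m →
    PlEquiv t₁ t₂ → PlEquiv t₂ t₃ → PlEquiv t₁ t₃ := by
  intro m
  induction m with
  | zero => intro t₁ t₂ t₃ h _ _; have := one_le_psize t₁; omega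
  | succ m ih =>
    intro t₁ t₂ t₃ h h12 h23
    cases h12 with
    | @node l₁ l₂ hf =>
      cases h23 with
      | @node l₂ l₃ hf' =>
        have hb : psizeL l₁ ≤ m := by simp [psize] at h; omega
        constructor
        intro i
        apply forall₂_trans_mem (hf i) (hf' i)
        intro a ha b c hab hbc
        obtain ⟨p, hp, rfl⟩ := List.mem_map.1 ha
        exact ih (le_trans (psize_le_of_mem (List.mem_of_mem_filter hp)) hb) hab hbc

theorem plEquiv_equivalence : Equivalence (@PlEquiv n) :=
  ⟨fun t => plEquiv_refl (psize t) t le_rfl,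
   fun h => plEquiv_symm _ le_rfl h,
   fun h h' => plEquiv_trans _ le_rfl h h'⟩

theorem mk_eq_iff {a b : PTree n} :
    Quot.mk PlEquiv a = Quot.mk PlEquiv b ↔ PlEquiv a b :=
  ⟨fun h => plEquiv_equivalence.eqvGen_iff.1 (Quot.eqvGen_exact h), Quot.sound⟩

theorem out_mk_equiv (a : PTree n) :
    PlEquiv (Quot.out (Quot.mk (@PlEquiv n) a)) a :=
  mk_eq_iff.1 (Quot.out_eq _)

/-! ### The grafting bijection -/

def qsize : PlTree n → ℕ :=
  Quot.lift psize fun a b h => psize_congr (psize a) le_rfl h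

theorem qsize_out (t : PlTree n) : psize (Quot.out t) = qsize t := by
  conv_rhs => rw [← Quot.out_eq t]
  rfl

def pinv : PTree n → Fin n → List (PlTree n)
  | .node l, i => (l.filter fun p => p.1 = i).map fun p => Quot.mk PlEquiv p.2

theorem flatMap_single {ι β : Type*} (G : ι → List β) (i : ι) :
    ∀ (l : List ι), l.Nodup → i ∈ l → (∀ j ∈ l, j ≠ i → G j = []) → l.flatMap G = G i := by
  intro l
  induction l with
  | nil => intro _ h; cases h
  | cons a l ih =>
    intro hnd hi hG
    rcases List.mem_cons.1 hi with rfl | hi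
    · have : l.flatMap G = [] := by
        apply List.flatMap_eq_nil_iff.2
        intro j hj
        exact hG j (List.mem_cons_of_mem _ hj) (fun h => (List.nodup_cons.1 hnd).1 (h ▸ hj))
      simp [List.flatMap_cons, this]
    · have ha : G a = [] := hG a (List.mem_cons_self) (fun h => (List.nodup_cons.1 hnd).1 (h ▸ hi))
      rw [List.flatMap_cons, ha, List.nil_append]
      exact ih (List.nodup_cons.1 hnd).2 hi (fun j hj => hG j (List.mem_cons_of_mem _ hj))

theorem filter_flatMap_color (F : Fin n → List (Fin n × PTree n))
    (hF : ∀ j, ∀ p ∈ F j, p.1 = j) (i : Fin n) :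
    (((List.finRange n).flatMap F).filter fun p => p.1 = i) = F i := by
  rw [List.filter_flatMap]
  have key : ∀ j, (F j).filter (fun p => decide (p.1 = i)) = if j = i then F i else [] := by
    intro j
    by_cases h : j = i
    · subst h
      simp only [if_pos rfl]
      apply List.filter_eq_self.2
      intro p hp
      simp [hF j p hp]
    · simp only [if_neg h]
      apply List.filter_eq_nil_iff.2
      intro p hp
      simp [hF j p hp, h]
  calc (List.finRange n).flatMap (fun j => (F j).filter fun p => decide (p.1 = i))
      = (List.finRange n).flatMap (fun j => if j = i then F i else []) := by
        simp only [key]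
    _ = F i := by
        rw [flatMap_single _ i _ (List.nodup_finRange n) (List.mem_finRange i)]
        · simp
        · intro j _ hj; simp [hj]

theorem graft_pinv (p : PTree n) : pgraftW (pinv p) = Quot.mk PlEquiv p := by
  cases p with
  | node l =>
    apply Quot.sound
    have hL : ∀ i : Fin n,
        ((((List.finRange n).flatMap fun j => (pinv (PTree.node l) j).map fun t => (j, Quot.out t)).filter
          fun p => p.1 = i))
        = (l.filter fun p => p.1 = i).map fun q => (i, Quot.out (Quot.mk PlEquiv q.2)) := by
      intro i
      rw [filter_flatMap_color]
      · simp only [pinv]; exact List.map_map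
      · intro j p hp
        obtain ⟨t, _, rfl⟩ := List.mem_map.1 hp
        rfl
    constructor
    intro i
    rw [hL i, List.map_map]
    apply forall₂_map_same
    intro q _
    exact out_mk_equiv q.2

theorem pgraftW_injective : Function.Injective (@pgraftW n) := by
  intro g₁ g₂ h
  have he := mk_eq_iff.1 h
  cases he with
  | node hf =>
    funext i
    have hc : ∀ (g : Fin n → List (PlTree n)),
        (((List.finRange n).flatMap fun j => (g j).map fun t => (j, Quot.out t)).filter
          fun p => p.1 = i) = (g i).map fun t => (i, Quot.out t) := by
      intro g
      apply filter_flatMap_color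
      intro j p hp
      obtain ⟨t, _, rfl⟩ := List.mem_map.1 hp
      rfl
    have := hf i
    rw [hc g₁, hc g₂] at this
    erw [List.map_map, List.map_map] at this
    apply eq_of_forall₂_map (f := fun t : PlTree n => Quot.out t) ?_ this
    intro a b hab
    rw [← Quot.out_eq a, ← Quot.out_eq b]
    exact Quot.sound hab

theorem pinv_out_graft (g : Fin n → List (PlTree n)) :
    pinv (Quot.out (pgraftW g)) = g := by
  apply pgraftW_injective
  rw [graft_pinv]; exact Quot.out_eq _

theorem qsize_lt_of_mem_pinv {p : PTree n} {i : Fin n} {s : PlTree n}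
    (hs : s ∈ pinv p i) : qsize s < psize p := by
  cases p with
  | node l =>
    obtain ⟨q, hq, rfl⟩ := List.mem_map.1 hs
    have h1 : psize q.2 ≤ psizeL l := psize_le_of_mem (List.mem_of_mem_filter hq)
    have h2 : qsize (Quot.mk PlEquiv q.2) = psize q.2 := rfl
    simp [h2, psize]; omega

/-! ### The canonical map to any associative `n`-algebra -/

noncomputable def phi {k : Type} [CommRing k] (B : AssocNAlgebra k n) : PlTree n → B.carrier :=
  fun t => B.op (tprod k fun i => ((pinv (Quot.out t) i).attach.map fun s => phi B s.1).prod)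
  termination_by t => qsize t
  decreasing_by
    have h1 := qsize_lt_of_mem_pinv s.2
    rw [qsize_out] at h1
    exact h1

theorem phi_def {k : Type} [CommRing k] (B : AssocNAlgebra k n) (t : PlTree n) :
    phi B t = B.op (tprod k fun i =>
      ((pinv (Quot.out t) i).attach.map fun s => phi B s.1).prod) := by
  rw [phi]

theorem phi_graft {k : Type} [CommRing k] (B : AssocNAlgebra k n)
    (g : Fin n → List (PlTree n)) :
    phi B (pgraftW g) = B.op (tprod k fun i => ((g i).map (phi B)).prod) := by
  rw [phi_def, pinv_out_graft]
  congr 1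
  apply congrArg
  funext i
  congr 1
  exact List.attach_map_val

theorem algHom_wmon {C : Type} [Semiring C] [Algebra k C]
    (h : FreeAlgebra k (PlTree n) →ₐ[k] C) (w : List (PlTree n)) :
    h (wmon k w) = (w.map fun t => h (FreeAlgebra.ι k t)).prod := by
  induction w with
  | nil => simp [wmon]
  | cons t w ih =>
    simp only [wmon, List.map_cons, List.prod_cons, _root_.map_mul] at *
    rw [ih]

theorem equiv_wmon (w : List (PlTree n)) :
    FreeAlgebra.equivMonoidAlgebraFreeMonoid (R := k) (X := PlTree n) (wmon k w)
      = MonoidAlgebra.single (FreeMonoid.ofList w) 1 := by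
  induction w with
  | nil =>
    simp only [wmon, List.map_nil, List.prod_nil, _root_.map_one]
    rw [MonoidAlgebra.one_def]
    rfl
  | cons t w ih =>
    have hmul : wmon k (t :: w) = FreeAlgebra.ι k t * wmon k w := by
      simp [wmon]
    rw [hmul, _root_.map_mul, ih]
    have hι : FreeAlgebra.equivMonoidAlgebraFreeMonoid (R := k) (X := PlTree n)
        (FreeAlgebra.ι k t) = MonoidAlgebra.single (FreeMonoid.of t) 1 := by
      simp [FreeAlgebra.equivMonoidAlgebraFreeMonoid, FreeAlgebra.lift_ι_apply]
    rw [hι, MonoidAlgebra.single_mul_single, one_mul]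
    rfl

theorem basis_apply (w : FreeMonoid (PlTree n)) :
    FreeAlgebra.basisFreeMonoid k (PlTree n) w = wmon k (FreeMonoid.toList w) := by
  have h1 : FreeAlgebra.basisFreeMonoid k (PlTree n) w
      = (FreeAlgebra.equivMonoidAlgebraFreeMonoid (R := k) (X := PlTree n)).symm.toLinearEquiv
        (MonoidAlgebra.single w 1) := by
    rw [FreeAlgebra.basisFreeMonoid, Module.Basis.map_apply]
    rfl
  rw [h1]
  apply (FreeAlgebra.equivMonoidAlgebraFreeMonoid (R := k) (X := PlTree n)).injective
  show (FreeAlgebra.equivMonoidAlgebraFreeMonoid (R := k) (X := PlTree n))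
      ((FreeAlgebra.equivMonoidAlgebraFreeMonoid (R := k) (X := PlTree n)).symm
        (MonoidAlgebra.single w 1)) = _
  rw [AlgEquiv.apply_symm_apply, equiv_wmon]
  rfl

theorem tensor_ext {C : Type*} [AddCommMonoid C] [Module k C]
    {F G : (⨂[k]^n (FreeAlgebra k (PlTree n))) →ₗ[k] C}
    (h : ∀ g : Fin n → List (PlTree n),
      F (tprod k fun i => wmon k (g i)) = G (tprod k fun i => wmon k (g i))) : F = G := by
  apply PiTensorProduct.ext
  apply Module.Basis.ext_multilinear (fun _ => FreeAlgebra.basisFreeMonoid k (PlTree n))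
  intro v
  simpa [basis_apply] using h fun i => FreeMonoid.toList (v i)

open scoped Classical in
noncomputable def lamMap : (⨂[k]^n (FreeAlgebra k (PlTree n))) →ₗ[k] FreeAlgebra k (PlTree n) :=
  (DFinsupp.lsum ℕ (M := fun _ : (Fin n → FreeMonoid (PlTree n)) => k) fun p =>
      LinearMap.toSpanSingleton k _ (FreeAlgebra.ι k (pgraftW fun i => FreeMonoid.toList (p i)))) ∘ₗ
    PiTensorProduct.lift
      ((MultilinearMap.dfinsuppFamily fun _ : Fin n → FreeMonoid (PlTree n) =>
          MultilinearMap.mkPiAlgebra k (Fin n) k).compLinearMap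
        fun _ => (finsuppLequivDFinsupp k).toLinearMap ∘ₗ
          (MonoidAlgebra.coeffLinearEquiv k).toLinearMap ∘ₗ
          (FreeAlgebra.equivMonoidAlgebraFreeMonoid (R := k)
            (X := PlTree n)).toLinearEquiv.toLinearMap)

open scoped Classical in
theorem lam_tprod (g : Fin n → List (PlTree n)) :
    lamMap k (tprod k fun i => wmon k (g i)) = FreeAlgebra.ι k (pgraftW g) := by
  rw [lamMap, LinearMap.comp_apply, PiTensorProduct.lift.tprod,
    MultilinearMap.compLinearMap_apply]
  have hx : ∀ i : Fin n,
      ((finsuppLequivDFinsupp k).toLinearMap ∘ₗ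
        (MonoidAlgebra.coeffLinearEquiv k).toLinearMap ∘ₗ
        (FreeAlgebra.equivMonoidAlgebraFreeMonoid (R := k)
          (X := PlTree n)).toLinearEquiv.toLinearMap) (wmon k (g i))
      = DFinsupp.single (FreeMonoid.ofList (g i)) (1 : k) := by
    intro i
    rw [LinearMap.comp_apply, LinearMap.comp_apply]
    show (finsuppLequivDFinsupp k) ((MonoidAlgebra.coeffLinearEquiv k)
        ((FreeAlgebra.equivMonoidAlgebraFreeMonoid (R := k) (X := PlTree n))
          (wmon k (g i)))) = _
    rw [equiv_wmon]
    show Finsupp.toDFinsupp (MonoidAlgebra.single _ (1 : k)).coeff = _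
    rw [MonoidAlgebra.coeff_single, Finsupp.toDFinsupp_single]
  simp only [hx]
  rw [MultilinearMap.dfinsuppFamily_single, DFinsupp.lsum_single]
  simp [MultilinearMap.mkPiAlgebra_apply, LinearMap.toSpanSingleton_apply]

/-- The category of associative `n`-algebras over a field
`k` of characteristic zero has an initial object `(A_n, λ_n)`, where `A_n` is
the free associative (tensor) algebra on planar `n`-trees (rooted trees with
`n`-coloured edges and, at each vertex, a separate linear ordering of the
incoming edges of each colour) and `λ_n` is the grafting operation on
`n`-tuples of ordered forests. -/
theorem freeAlgebra_planar_trees_initial (k : Type) [Field k] [CharZero k] (n : ℕ) :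
    ∃ lam : (⨂[k]^n (FreeAlgebra k (PlTree n))) →ₗ[k] FreeAlgebra k (PlTree n),
      -- `lam` is the grafting operation on ordered forests
      (∀ g : Fin n → List (PlTree n),
        lam (tprod k fun i => wmon k (g i)) = FreeAlgebra.ι k (pgraftW g)) ∧
      -- `(A_n, λ_n)` is initial among associative `n`-algebras
      (∀ B : AssocNAlgebra k n,
        ∃! f : FreeAlgebra k (PlTree n) →ₐ[k] B.carrier,
          B.op ∘ₗ (PiTensorProduct.map fun _ : Fin n => f.toLinearMap)
            = f.toLinearMap ∘ₗ lam) := by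
  refine ⟨lamMap k, lam_tprod k, ?_⟩
  intro B
  refine ⟨FreeAlgebra.lift k (phi B), ?_, ?_⟩
  · apply tensor_ext k
    intro g
    simp only [LinearMap.comp_apply, PiTensorProduct.map_tprod,
      AlgHom.toLinearMap_apply, lam_tprod]
    have h1 : ∀ i : Fin n,
        (FreeAlgebra.lift k (phi B)) (wmon k (g i)) = ((g i).map (phi B)).prod := by
      intro i
      rw [algHom_wmon]
      congr 1
      apply List.map_congr_left
      intro t _
      exact FreeAlgebra.lift_ι_apply _ _
    calc B.op (tprod k fun i => (FreeAlgebra.lift k (phi B)) (wmon k (g i)))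
        = B.op (tprod k fun i => ((g i).map (phi B)).prod) :=
          congrArg _ (congrArg _ (funext h1))
      _ = phi B (pgraftW g) := (phi_graft B g).symm
      _ = (FreeAlgebra.lift k (phi B)) (FreeAlgebra.ι k (pgraftW g)) :=
          (FreeAlgebra.lift_ι_apply _ _).symm
  · intro f' hf'
    have key : ∀ (m : ℕ) (t : PlTree n), qsize t ≤ m → f' (FreeAlgebra.ι k t) = phi B t := by
      intro m
      induction m with
      | zero =>
        intro t ht
        exfalso
        have h1 := one_le_psize (Quot.out t)
        rw [qsize_out] at h1
        omega
      | succ m ih =>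
        intro t ht
        have hgt : pgraftW (pinv (Quot.out t)) = t := by rw [graft_pinv]; exact Quot.out_eq _
        have heq := LinearMap.congr_fun hf' (tprod k fun i => wmon k (pinv (Quot.out t) i))
        simp only [LinearMap.comp_apply, PiTensorProduct.map_tprod,
          AlgHom.toLinearMap_apply, lam_tprod] at heq
        rw [hgt] at heq
        rw [← heq]
        have hw : ∀ i, f' (wmon k (pinv (Quot.out t) i))
            = ((pinv (Quot.out t) i).map (phi B)).prod := by
          intro i
          rw [algHom_wmon]
          congr 1
          apply List.map_congr_left
          intro s hs
          apply ih
          have h1 := qsize_lt_of_mem_pinv hs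
          rw [qsize_out] at h1
          omega
        calc B.op (tprod k fun i => f' (wmon k (pinv (Quot.out t) i)))
            = B.op (tprod k fun i => ((pinv (Quot.out t) i).map (phi B)).prod) :=
              congrArg _ (congrArg _ (funext hw))
          _ = phi B (pgraftW (pinv (Quot.out t))) := (phi_graft B _).symm
          _ = phi B t := by rw [hgt]
    apply FreeAlgebra.hom_ext
    funext t
    show f' (FreeAlgebra.ι k t) = (FreeAlgebra.lift k (phi B)) (FreeAlgebra.ι k t)
    rw [FreeAlgebra.lift_ι_apply, key (qsize t) t le_rfl]

end CTrees
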